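/- arXiv:1501.05744 — 3 statements merged into one kernel-verified Lean document; each statement's English description precedes it below -/
import Mathlib

section
/- Theorem 2, (3) ⇒ (1): let Π ∈ 𝓜ᵐᵐ and suppose there exists λ : Fin J → ℝ with λ j ≥ 0 such that (∑_{n'<M} z n' λ * Π n') - z m λ is positive semidefinite for all m ∈ Fin M and λ j * (b j - ∑ m, Re(Tr(a j m * Π m))) = 0 for all j ∈ Fin J. Then Π is an optimal measurement, i.e. f(Π) ≥ f(Π') for every Π' ∈ 𝓜ᵐᵐ. -/
open Matrix Complex
open scoped ComplexOrder

noncomputable section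

/-- A POVM with `M` outcomes: each detection operator is positive semidefinite
and they sum to the identity. -/
def IsPOVM {n : Type*} [Fintype n] [DecidableEq n] {M : ℕ}
    (P : Fin M → Matrix n n ℂ) : Prop :=
  (∀ m, (P m).PosSemidef) ∧ ∑ m, P m = 1

/-- Membership in the feasible set `𝓜ᵐᵐ`. -/
def Feasible {n : Type*} [Fintype n] [DecidableEq n] {M J : ℕ}
    (a : Fin J → Fin M → Matrix n n ℂ) (b : Fin J → ℝ)
    (P : Fin M → Matrix n n ℂ) : Prop :=
  IsPOVM P ∧ ∀ j, ∑ m, ((a j m * P m).trace).re ≤ b j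

/-- The primal objective `f(Π)`. -/
def primalObj {n : Type*} [Fintype n] {M : ℕ}
    (c : Fin M → Matrix n n ℂ) (P : Fin M → Matrix n n ℂ) : ℝ :=
  ∑ m, ((c m * P m).trace).re

/-- The operator `z m λ = c m - ∑ j, λ j • a j m`. -/
def zOp {M J : ℕ} {n : Type*}
    (c : Fin M → Matrix n n ℂ) (a : Fin J → Fin M → Matrix n n ℂ)
    (lam : Fin J → ℝ) (m : Fin M) : Matrix n n ℂ :=
  c m - ∑ j, (lam j : ℂ) • a j m

/-- The dual objective `s(X, λ)`. -/
def dualObj {n : Type*} [Fintype n] {J : ℕ}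
    (b : Fin J → ℝ) (X : Matrix n n ℂ) (lam : Fin J → ℝ) : ℝ :=
  X.trace.re + ∑ j, lam j * b j

/-- Dual feasibility: `X` Hermitian, `λ ≥ 0`, and `X - z m λ` positive semidefinite. -/
def DualFeasible {n : Type*} [Fintype n] {M J : ℕ}
    (c : Fin M → Matrix n n ℂ) (a : Fin J → Fin M → Matrix n n ℂ)
    (X : Matrix n n ℂ) (lam : Fin J → ℝ) : Prop :=
  X.IsHermitian ∧ (∀ j, 0 ≤ lam j) ∧ ∀ m, (X - zOp c a lam m).PosSemidef

lemma psd_trace_re_nonneg {n : Type*} [Fintype n] [DecidableEq n]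
    {A : Matrix n n ℂ} (hA : A.PosSemidef) : 0 ≤ A.trace.re := by
  have h : (0:ℂ) ≤ A.trace := by
    rw [Matrix.trace]
    apply Finset.sum_nonneg
    intro i _
    exact hA.diag_nonneg
  exact (Complex.le_def.mp h).1

lemma psd_mul_trace_re_nonneg {n : Type*} [Fintype n] [DecidableEq n]
    {A B : Matrix n n ℂ} (hA : A.PosSemidef) (hB : B.PosSemidef) :
    0 ≤ ((A * B).trace).re := by
  obtain ⟨R, rfl⟩ : ∃ R : Matrix n n ℂ, A = Rᴴ * R := by
    open scoped MatrixOrder Matrix.Norms.L2Operator in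
    exact CStarAlgebra.nonneg_iff_eq_star_mul_self.mp hA.nonneg
  obtain ⟨Q, rfl⟩ : ∃ Q : Matrix n n ℂ, B = Qᴴ * Q := by
    open scoped MatrixOrder Matrix.Norms.L2Operator in
    exact CStarAlgebra.nonneg_iff_eq_star_mul_self.mp hB.nonneg
  have h : (Rᴴ * R * (Qᴴ * Q)).trace = ((Q * Rᴴ)ᴴ * (Q * Rᴴ)).trace := by
    rw [mul_assoc, Matrix.trace_mul_comm]
    rw [Matrix.conjTranspose_mul, Matrix.conjTranspose_conjTranspose]
    noncomm_ring
  rw [h]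
  exact psd_trace_re_nonneg (Matrix.posSemidef_conjTranspose_mul_self _)

lemma z_trace_sum {n : Type*} [Fintype n] [DecidableEq n] {M J : ℕ}
    (c : Fin M → Matrix n n ℂ) (a : Fin J → Fin M → Matrix n n ℂ)
    (lam : Fin J → ℝ) (Q : Fin M → Matrix n n ℂ) :
    ∑ m, ((zOp c a lam m * Q m).trace).re
      = primalObj c Q - ∑ j, lam j * ∑ m, ((a j m * Q m).trace).re := by
  have h1 : ∀ m, ((zOp c a lam m * Q m).trace).re
      = ((c m * Q m).trace).re - ∑ j, lam j * ((a j m * Q m).trace).re := by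
    intro m
    rw [zOp, sub_mul, Finset.sum_mul, Matrix.trace_sub, Matrix.trace_sum, Complex.sub_re]
    congr 1
    rw [Complex.re_sum]
    refine Finset.sum_congr rfl fun j _ => ?_
    rw [smul_mul_assoc, Matrix.trace_smul]
    simp [Complex.mul_re]
  simp_rw [h1, Finset.sum_sub_distrib, primalObj, Finset.mul_sum]
  rw [Finset.sum_comm]

/-- Theorem 2, (3) ⇒ (1). -/
theorem X_form_implies_optimal {n : Type*} [Fintype n] [DecidableEq n] [Nonempty n]
    {M J : ℕ}
    (c : Fin M → Matrix n n ℂ) (a : Fin J → Fin M → Matrix n n ℂ) (b : Fin J → ℝ)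
    (hc : ∀ m, (c m).IsHermitian) (ha : ∀ j m, (a j m).IsHermitian)
    (P : Fin M → Matrix n n ℂ) (hP : Feasible a b P)
    (lam : Fin J → ℝ) (hlam : ∀ j, 0 ≤ lam j)
    (hpsd : ∀ m, ((∑ n', zOp c a lam n' * P n') - zOp c a lam m).PosSemidef)
    (hslack : ∀ j, lam j * (b j - ∑ m, ((a j m * P m).trace).re) = 0) :
    ∀ P', Feasible a b P' → primalObj c P' ≤ primalObj c P := by
  intro P' hP'
  set X : Matrix n n ℂ := ∑ n', zOp c a lam n' * P n' with hX
  have hslack' : ∀ j, lam j * ∑ m, ((a j m * P m).trace).re = lam j * b j := by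
    intro j
    nlinarith [hslack j]
  have htrX : X.trace.re = primalObj c P - ∑ j, lam j * b j := by
    rw [hX, Matrix.trace_sum, Complex.re_sum, z_trace_sum]
    congr 1
    exact Finset.sum_congr rfl fun j _ => hslack' j
  have hB : ∑ m, ((zOp c a lam m * P' m).trace).re ≤ X.trace.re := by
    have hXtr : X.trace = ∑ m, (X * P' m).trace := by
      rw [← Matrix.trace_sum]
      simp_rw [← Finset.mul_sum, hP'.1.2, mul_one]
    rw [hXtr, Complex.re_sum]
    apply Finset.sum_le_sum
    intro m _
    have h0 : 0 ≤ (((X - zOp c a lam m) * P' m).trace).re :=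
      psd_mul_trace_re_nonneg (hpsd m) (hP'.1.1 m)
    rw [sub_mul, Matrix.trace_sub, Complex.sub_re] at h0
    linarith
  have hA : primalObj c P' = ∑ m, ((zOp c a lam m * P' m).trace).re
      + ∑ j, lam j * ∑ m, ((a j m * P' m).trace).re := by
    rw [z_trace_sum]; ring
  have hC : ∑ j, lam j * ∑ m, ((a j m * P' m).trace).re ≤ ∑ j, lam j * b j := by
    apply Finset.sum_le_sum
    intro j _
    exact mul_le_mul_of_nonneg_left (hP'.2 j) (hlam j)
  linarith
end
end

section
/- Theorem 3, (2) ⇒ (3): let μ* ∈ P and Π* ∈ 𝓜ᵐᵐ, and suppose f k (Π*) ≥ F*(μ*) for every k ∈ Fin K. Then F*(μ*) = F(μ*, Π*), and f k (Π*) ≥ f k' (Π*) for all k, k' ∈ Fin K such that μ* k' > 0. -/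
open Matrix Complex
open scoped ComplexOrder

noncomputable section

lemma psd_sum {n : Type*} [Fintype n] {ι : Type*} (s : Finset ι)
    (f : ι → Matrix n n ℂ) (hf : ∀ i ∈ s, (f i).PosSemidef) :
    (∑ i ∈ s, f i).PosSemidef :=
  Finset.sum_induction f _ (fun _ _ ha hb => ha.add hb) .zero hf

lemma diag_re_le_one {n : Type*} [Fintype n] [DecidableEq n]
    {P : Matrix n n ℂ} (hP : P.PosSemidef) (hQ : (1 - P).PosSemidef) (i : n) :
    0 ≤ (P i i).re ∧ (P i i).re ≤ 1 := by
  have h1 := hP.re_dotProduct_nonneg (Pi.single i 1)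
  have h2 := hQ.re_dotProduct_nonneg (Pi.single i 1)
  simp [dotProduct, Pi.single_apply, mulVec, Finset.sum_ite_eq, Matrix.sub_apply, one_apply] at h1 h2
  exact ⟨h1, by linarith [h2]⟩

lemma entry_norm_le_one {n : Type*} [Fintype n] [DecidableEq n]
    {P : Matrix n n ℂ} (hP : P.PosSemidef) (hQ : (1 - P).PosSemidef) (i j : n) :
    ‖P i j‖ ≤ 1 := by
  obtain ⟨hi0, hi1⟩ := diag_re_le_one hP hQ i
  obtain ⟨hj0, hj1⟩ := diag_re_le_one hP hQ j
  by_cases hij : i = j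
  · subst hij
    have hherm : P i i = star (P i i) := (Matrix.IsHermitian.apply hP.1 i i).symm
    have h5 : P i i = ((P i i).re : ℂ) := (Complex.conj_eq_iff_re.mp hherm.symm).symm
    rw [h5]
    simpa using abs_le.mpr ⟨by linarith, hi1⟩
  by_cases hz : P i j = 0
  · simp [hz]
  set z := P i j with hzdef
  set r := ‖z‖ with hrdef
  have hr : 0 < r := norm_pos_iff.mpr hz
  set β : ℂ := -(star z) / r with hβ
  have key := hP.re_dotProduct_nonneg (Pi.single i 1 + Pi.single j β)
  have hstar : star (Pi.single i (1:ℂ) + Pi.single j β) =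
      (Pi.single i (1:ℂ) + Pi.single j (star β) : n → ℂ) := by
    funext l
    simp only [Pi.star_apply, Pi.add_apply, Pi.single_apply]
    split_ifs <;> simp
  rw [hstar] at key
  have hexpand : dotProduct (Pi.single i (1:ℂ) + Pi.single j (star β) : n → ℂ)
      (P *ᵥ (Pi.single i 1 + Pi.single j β)) =
      P i i + P i j * β + star β * P j i + star β * (P j j * β) := by
    simp [mulVec_add, mulVec_single, dotProduct_add, add_dotProduct,
      single_dotProduct, Pi.add_apply, mul_one]
    ring
  rw [hexpand] at key
  have hji : P j i = star z := by
    have := Matrix.IsHermitian.apply hP.1 j i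
    rw [← this, hzdef]
  have hzz : z * (starRingEnd ℂ) z = (r:ℂ) * (r:ℂ) := by
    rw [Complex.mul_conj]
    norm_cast
    rw [Complex.normSq_eq_norm_sq, hrdef]
    ring
  have hzz' : z * star z = (r:ℂ) * (r:ℂ) := hzz
  have hrne : (r : ℂ) ≠ 0 := by exact_mod_cast hr.ne'
  have e1 : P i j * β = ((-r : ℝ) : ℂ) := by
    rw [← hzdef, hβ]
    field_simp
    push_cast
    linear_combination (-1:ℂ) * hzz'
  have e2 : star β * P j i = ((-r : ℝ) : ℂ) := by
    rw [hji, hβ, star_div₀, star_neg, star_star]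
    have : (starRingEnd ℂ) (r : ℂ) = (r : ℂ) := Complex.conj_ofReal r
    rw [show star ((r:ℂ)) = (r:ℂ) from this]
    field_simp
    push_cast
    linear_combination (-1:ℂ) * hzz'
  have e3 : star β * (P j j * β) = P j j := by
    have hb2 : star β * β = 1 := by
      rw [hβ, star_div₀, star_neg, star_star, show star ((r:ℂ)) = (r:ℂ) from Complex.conj_ofReal r]
      field_simp
      linear_combination hzz'
    calc star β * (P j j * β) = P j j * (star β * β) := by ring
      _ = P j j := by rw [hb2, mul_one]
  rw [e1, e2, e3] at key
  simp only [RCLike.re_to_complex, Complex.add_re, Complex.ofReal_re] at key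
  have : r ≤ ((P i i).re + (P j j).re) / 2 := by linarith
  linarith

lemma trace_re_le_sum_norm {n : Type*} [Fintype n] (C P : Matrix n n ℂ)
    (h : ∀ i j, ‖P i j‖ ≤ 1) :
    ((C * P).trace).re ≤ ∑ i, ∑ j, ‖C i j‖ := by
  have ht : (C * P).trace = ∑ i, ∑ j, C i j * P j i := by
    simp [Matrix.trace, Matrix.mul_apply, Matrix.diag]
  rw [ht]
  calc (∑ i, ∑ j, C i j * P j i).re ≤ ‖∑ i, ∑ j, C i j * P j i‖ := Complex.re_le_norm _
    _ ≤ ∑ i, ‖∑ j, C i j * P j i‖ := norm_sum_le _ _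
    _ ≤ ∑ i, ∑ j, ‖C i j * P j i‖ := Finset.sum_le_sum fun i _ => norm_sum_le _ _
    _ ≤ ∑ i, ∑ j, ‖C i j‖ := by
        refine Finset.sum_le_sum fun i _ => Finset.sum_le_sum fun j _ => ?_
        rw [norm_mul]
        exact mul_le_of_le_one_right (norm_nonneg _) (h j i)

/-- The probability simplex `P` over `Fin K`. -/
def Simplex {K : ℕ} (μ : Fin K → ℝ) : Prop :=
  (∀ k, 0 ≤ μ k) ∧ ∑ k, μ k = 1

/-- The functions `f k (Π) = ∑ m, Re(Tr(c k m * Π m)) + d k`. -/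
def fObj {n : Type*} [Fintype n] {M K : ℕ}
    (c : Fin K → Fin M → Matrix n n ℂ) (d : Fin K → ℝ)
    (k : Fin K) (P : Fin M → Matrix n n ℂ) : ℝ :=
  ∑ m, ((c k m * P m).trace).re + d k

/-- The payoff function `F(μ, Π) = ∑ k, μ k * f k (Π)`. -/
def FObj {n : Type*} [Fintype n] {M K : ℕ}
    (c : Fin K → Fin M → Matrix n n ℂ) (d : Fin K → ℝ)
    (μ : Fin K → ℝ) (P : Fin M → Matrix n n ℂ) : ℝ :=
  ∑ k, μ k * fObj c d k P

/-- `F⋆(μ)`: the supremum of `F(μ, Π)` over feasible `Π`. -/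
def Fstar {n : Type*} [Fintype n] [DecidableEq n] {M J K : ℕ}
    (a : Fin J → Fin M → Matrix n n ℂ) (b : Fin J → ℝ)
    (c : Fin K → Fin M → Matrix n n ℂ) (d : Fin K → ℝ)
    (μ : Fin K → ℝ) : ℝ :=
  sSup ((fun P => FObj c d μ P) '' {P | Feasible a b P})

/-- A minimax solution (saddle point of `F`). -/
def IsMinimaxSol {n : Type*} [Fintype n] [DecidableEq n] {M J K : ℕ}
    (a : Fin J → Fin M → Matrix n n ℂ) (b : Fin J → ℝ)
    (c : Fin K → Fin M → Matrix n n ℂ) (d : Fin K → ℝ)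
    (μs : Fin K → ℝ) (Ps : Fin M → Matrix n n ℂ) : Prop :=
  Simplex μs ∧ Feasible a b Ps ∧
    (∀ P, Feasible a b P → FObj c d μs P ≤ FObj c d μs Ps) ∧
    (∀ μ, Simplex μ → FObj c d μs Ps ≤ FObj c d μ Ps)

lemma povm_entry_norm_le_one {n : Type*} [Fintype n] [DecidableEq n] {M : ℕ}
    {P : Fin M → Matrix n n ℂ} (hP : IsPOVM P) (m : Fin M) (i j : n) :
    ‖P m i j‖ ≤ 1 := by
  have h1m : (1 - P m).PosSemidef := by
    have he : 1 - P m = ∑ m' ∈ Finset.univ.erase m, P m' := by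
      rw [Finset.sum_erase_eq_sub (Finset.mem_univ m), hP.2]
    rw [he]
    exact psd_sum _ _ fun i _ => hP.1 i
  exact entry_norm_le_one (hP.1 m) h1m i j

lemma FObj_le_bound {n : Type*} [Fintype n] [DecidableEq n] {M J K : ℕ}
    (a : Fin J → Fin M → Matrix n n ℂ) (b : Fin J → ℝ)
    (c : Fin K → Fin M → Matrix n n ℂ) (d : Fin K → ℝ)
    {μ : Fin K → ℝ} {P : Fin M → Matrix n n ℂ}
    (hμ : Simplex μ) (hP : Feasible a b P) :
    FObj c d μ P ≤ ∑ k, ((∑ m, ∑ i, ∑ j, ‖c k m i j‖) + |d k|) := by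
  have hf : ∀ k, fObj c d k P ≤ (∑ m, ∑ i, ∑ j, ‖c k m i j‖) + |d k| := by
    intro k
    unfold fObj
    have h1 : ∑ m, ((c k m * P m).trace).re ≤ ∑ m, ∑ i, ∑ j, ‖c k m i j‖ :=
      Finset.sum_le_sum fun m _ =>
        trace_re_le_sum_norm _ _ fun i j => povm_entry_norm_le_one hP.1 m i j
    have h2 : d k ≤ |d k| := le_abs_self _
    linarith
  have hCnn : ∀ k, (0:ℝ) ≤ (∑ m, ∑ i, ∑ j, ‖c k m i j‖) + |d k| := by
    intro k
    have : (0:ℝ) ≤ ∑ m, ∑ i, ∑ j, ‖c k m i j‖ :=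
      Finset.sum_nonneg fun m _ => Finset.sum_nonneg fun i _ =>
        Finset.sum_nonneg fun j _ => norm_nonneg _
    positivity
  have hμ1 : ∀ k, μ k ≤ 1 := by
    intro k
    rw [← hμ.2]
    exact Finset.single_le_sum (fun i _ => hμ.1 i) (Finset.mem_univ k)
  refine Finset.sum_le_sum fun k _ => ?_
  calc μ k * fObj c d k P ≤ μ k * ((∑ m, ∑ i, ∑ j, ‖c k m i j‖) + |d k|) :=
        mul_le_mul_of_nonneg_left (hf k) (hμ.1 k)
    _ ≤ 1 * ((∑ m, ∑ i, ∑ j, ‖c k m i j‖) + |d k|) :=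
        mul_le_mul_of_nonneg_right (hμ1 k) (hCnn k)
    _ = _ := one_mul _



/-- Theorem 3, (2) ⇒ (3). -/
theorem fk_ge_implies_eq_and_mono
    {n : Type*} [Fintype n] [DecidableEq n] [Nonempty n]
    {M J K : ℕ}
    (a : Fin J → Fin M → Matrix n n ℂ) (b : Fin J → ℝ)
    (c : Fin K → Fin M → Matrix n n ℂ) (d : Fin K → ℝ)
    (ha : ∀ j m, (a j m).IsHermitian) (hc : ∀ k m, (c k m).IsHermitian)
    (μs : Fin K → ℝ) (Ps : Fin M → Matrix n n ℂ)
    (hμ : Simplex μs) (hP : Feasible a b Ps)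
    (h : ∀ k, Fstar a b c d μs ≤ fObj c d k Ps) :
    Fstar a b c d μs = FObj c d μs Ps ∧
      ∀ k k', 0 < μs k' → fObj c d k' Ps ≤ fObj c d k Ps := by
  classical
  have hBdd : BddAbove ((fun P => FObj c d μs P) '' {P | Feasible a b P}) := by
    refine ⟨∑ k, ((∑ m, ∑ i, ∑ j, ‖c k m i j‖) + |d k|), ?_⟩
    rintro y ⟨P, hPf, rfl⟩
    exact FObj_le_bound a b c d hμ hPf
  have hle : FObj c d μs Ps ≤ Fstar a b c d μs :=
    le_csSup hBdd ⟨Ps, hP, rfl⟩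
  have hge : Fstar a b c d μs ≤ FObj c d μs Ps := by
    calc Fstar a b c d μs = (∑ k, μs k) * Fstar a b c d μs := by rw [hμ.2, one_mul]
      _ = ∑ k, μs k * Fstar a b c d μs := Finset.sum_mul ..
      _ ≤ ∑ k, μs k * fObj c d k Ps :=
          Finset.sum_le_sum fun k _ => mul_le_mul_of_nonneg_left (h k) (hμ.1 k)
      _ = FObj c d μs Ps := rfl
  have heq : Fstar a b c d μs = FObj c d μs Ps := le_antisymm hge hle
  refine ⟨heq, fun k k' hk' => ?_⟩
  have hzero : ∑ j, μs j * (fObj c d j Ps - Fstar a b c d μs) = 0 := by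
    simp only [mul_sub]
    rw [Finset.sum_sub_distrib, ← Finset.sum_mul, hμ.2, one_mul]
    have : ∑ j, μs j * fObj c d j Ps = FObj c d μs Ps := rfl
    rw [this, heq, sub_self]
  have hterm := (Finset.sum_eq_zero_iff_of_nonneg fun j _ =>
    mul_nonneg (hμ.1 j) (sub_nonneg.mpr (h j))).mp hzero k' (Finset.mem_univ k')
  have hfk' : fObj c d k' Ps = Fstar a b c d μs := by
    rcases mul_eq_zero.mp hterm with h1 | h2
    · exact absurd h1 hk'.ne'
    · linarith [sub_eq_zero.mp h2]
  rw [hfk']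
  exact h k
end
end

section
/- Theorem 5, first part: under the covariance assumptions on both constraints and objective, for every Φ ∈ 𝓜ᵐᵐ there exists Π ∈ 𝓜ᵐᵐ such that f(Π) = f(Φ) and Π is G-covariant, i.e. (U g) * Π m * (U g)† = Π (g • m) for all g ∈ G and m ∈ Fin M. -/
open Matrix Complex
open scoped ComplexOrder

noncomputable section

/-- The action `g · A = (U g) * A * (U g)†` of a group on matrices induced by a
unitary representation `U`. -/
def conjAct {n : Type*} [Fintype n] [DecidableEq n] {G : Type*} [Group G]
    (U : G →* Matrix.unitaryGroup n ℂ) (g : G) (A : Matrix n n ℂ) : Matrix n n ℂ :=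
  (U g : Matrix n n ℂ) * A * star (U g : Matrix n n ℂ)

/-- The mapping `κ_g` sending `Φ` to `m ↦ (U g)⁻¹ * Φ (g • m) * (U g)`
(note `(U g)⁻¹ = (U g)† = star (U g)`). -/
def kappa {n : Type*} [Fintype n] [DecidableEq n] {G : Type*} [Group G] {M : ℕ}
    [MulAction G (Fin M)]
    (U : G →* Matrix.unitaryGroup n ℂ) (g : G)
    (Φ : Fin M → Matrix n n ℂ) : Fin M → Matrix n n ℂ :=
  fun m => star (U g : Matrix n n ℂ) * Φ (g • m) * (U g : Matrix n n ℂ)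


section Aux

variable {n : Type*} [Fintype n] [DecidableEq n]

lemma posSemidef_smul_real {A : Matrix n n ℂ} (hA : A.PosSemidef) {r : ℝ} (hr : 0 ≤ r) :
    ((r : ℂ) • A).PosSemidef := by
  constructor
  · have := hA.isHermitian
    rw [Matrix.IsHermitian, conjTranspose_smul, this]
    simp
  · intro x
    exact (hA.smul (Complex.zero_le_real.mpr hr)).2 x

lemma posSemidef_sum {ι : Type*} (s : Finset ι) (f : ι → Matrix n n ℂ)
    (h : ∀ i ∈ s, (f i).PosSemidef) : (∑ i ∈ s, f i).PosSemidef := by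
  classical
  induction s using Finset.induction_on with
  | empty => simpa using Matrix.PosSemidef.zero
  | insert _ _ hx ih =>
    rw [Finset.sum_insert hx]
    exact (h _ (Finset.mem_insert_self _ _)).add
      (ih fun i hi => h i (Finset.mem_insert_of_mem hi))

end Aux

/-- Theorem 5, first part: for every feasible `Φ` there is a `G`-covariant feasible `Π`
with the same objective value. -/
theorem exists_covariant_same_value
    {n : Type*} [Fintype n] [DecidableEq n] [Nonempty n]
    {G : Type*} [Group G] [Fintype G]
    {M J : ℕ} [MulAction G (Fin M)] [MulAction G (Fin J)]
    (U : G →* Matrix.unitaryGroup n ℂ)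
    (a : Fin J → Fin M → Matrix n n ℂ) (b : Fin J → ℝ)
    (ha : ∀ j m, (a j m).IsHermitian)
    (hne : ∃ P, Feasible a b P)
    (hcova : ∀ (g : G) j m, conjAct U g (a j m) = a (g • j) (g • m))
    (hcovb : ∀ (g : G) j, b j = b (g • j))
    (c : Fin M → Matrix n n ℂ) (hc : ∀ m, (c m).IsHermitian)
    (hcovc : ∀ (g : G) m, conjAct U g (c m) = c (g • m))
    (Φ : Fin M → Matrix n n ℂ) (hΦ : Feasible a b Φ) :
    ∃ P : Fin M → Matrix n n ℂ, Feasible a b P ∧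
      primalObj c P = primalObj c Φ ∧
      ∀ (g : G) (m : Fin M), conjAct U g (P m) = P (g • m) := by
  classical
  obtain ⟨⟨hpos, hsum⟩, hfeas⟩ := hΦ
  set N : ℝ := (Fintype.card G : ℝ) with hN
  have hNpos : 0 < N := by
    rw [hN]; exact Nat.cast_pos.mpr (Fintype.card_pos (α := G))
  set P : Fin M → Matrix n n ℂ :=
    fun m => ((N : ℂ))⁻¹ • ∑ g : G, kappa U g Φ m with hP
  have hstar_mul : ∀ g : G, star (U g : Matrix n n ℂ) * (U g : Matrix n n ℂ) = 1 :=
    fun g => (U g).2.1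
  have key : ∀ (g : G) (d d' : Fin M → Matrix n n ℂ),
      (∀ m, conjAct U g (d m) = d' (g • m)) →
      ∑ m, ((d m * kappa U g Φ m).trace).re = ∑ m, ((d' m * Φ m).trace).re := by
    intro g d d' hd
    have h1 : ∀ m, (d m * kappa U g Φ m).trace = (d' (g • m) * Φ (g • m)).trace := by
      intro m
      have h0 : d m * kappa U g Φ m =
          d m * (star (U g : Matrix n n ℂ) * Φ (g • m) * (U g : Matrix n n ℂ)) := rfl
      rw [h0]
      have h2 : (d m * (star (U g : Matrix n n ℂ) * Φ (g • m) * (U g : Matrix n n ℂ))).trace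
          = ((U g : Matrix n n ℂ) * d m * star (U g : Matrix n n ℂ) * Φ (g • m)).trace := by
        rw [show d m * (star (U g : Matrix n n ℂ) * Φ (g • m) * (U g : Matrix n n ℂ))
            = (d m * star (U g : Matrix n n ℂ) * Φ (g • m)) * (U g : Matrix n n ℂ) by
          noncomm_ring]
        rw [Matrix.trace_mul_comm]
        noncomm_ring
      rw [h2, ← hd m]
      rfl
    calc ∑ m, ((d m * kappa U g Φ m).trace).re
        = ∑ m, ((d' (g • m) * Φ (g • m)).trace).re :=
          Finset.sum_congr rfl fun m _ => by rw [h1 m]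
      _ = ∑ m, ((d' m * Φ m).trace).re :=
          Fintype.sum_equiv (MulAction.toPerm g) _ _ (fun m => rfl)
  have hkappa_sum : ∀ g : G, ∑ m, kappa U g Φ m = 1 := by
    intro g
    have h0 : ∑ m, kappa U g Φ m
        = star (U g : Matrix n n ℂ) * (∑ m, Φ (g • m)) * (U g : Matrix n n ℂ) := by
      simp [kappa, Finset.sum_mul, Finset.mul_sum]
    rw [h0]
    have hre : ∑ m, Φ (g • m) = ∑ m, Φ m :=
      Fintype.sum_equiv (MulAction.toPerm g) _ _ (fun m => rfl)
    rw [hre, hsum, mul_one, hstar_mul]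
  have hkappa_pos : ∀ (g : G) (m : Fin M), (kappa U g Φ m).PosSemidef := by
    intro g m
    have := (hpos (g • m)).mul_mul_conjTranspose_same (star (U g : Matrix n n ℂ))
    simpa [kappa, conjTranspose_conjTranspose, Matrix.star_eq_conjTranspose] using this
  have htraceP : ∀ (d : Fin M → Matrix n n ℂ),
      ∑ m, ((d m * P m).trace).re
        = N⁻¹ * ∑ g : G, ∑ m, ((d m * kappa U g Φ m).trace).re := by
    intro d
    have hterm : ∀ m, ((d m * P m).trace).re
        = ∑ g : G, N⁻¹ * ((d m * kappa U g Φ m).trace).re := by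
      intro m
      have h0 : d m * P m = ((N : ℂ))⁻¹ • ∑ g : G, d m * kappa U g Φ m := by
        rw [hP]
        simp [Finset.mul_sum, Matrix.mul_smul]
      rw [h0, Matrix.trace_smul, Matrix.trace_sum, smul_eq_mul,
        show ((N:ℂ))⁻¹ = ((N⁻¹ : ℝ) : ℂ) by push_cast; ring,
        Complex.re_ofReal_mul, Complex.re_sum, Finset.mul_sum]
    calc ∑ m, ((d m * P m).trace).re
        = ∑ m, ∑ g : G, N⁻¹ * ((d m * kappa U g Φ m).trace).re :=
          Finset.sum_congr rfl fun m _ => hterm m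
      _ = ∑ g : G, ∑ m, N⁻¹ * ((d m * kappa U g Φ m).trace).re := Finset.sum_comm
      _ = N⁻¹ * ∑ g : G, ∑ m, ((d m * kappa U g Φ m).trace).re := by
          rw [Finset.mul_sum]
          exact Finset.sum_congr rfl fun g _ => (Finset.mul_sum _ _ _).symm
  refine ⟨P, ⟨⟨?_, ?_⟩, ?_⟩, ?_, ?_⟩
  · intro m
    have hps := posSemidef_smul_real
      (posSemidef_sum Finset.univ (fun g => kappa U g Φ m) (fun g _ => hkappa_pos g m))
      (le_of_lt (inv_pos.mpr hNpos))
    rw [hP]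
    simpa [Complex.ofReal_inv] using hps
  · have h0 : ∑ m, P m = ((N : ℂ))⁻¹ • ∑ g : G, ∑ m, kappa U g Φ m := by
      rw [hP, ← Finset.smul_sum, Finset.sum_comm]
    rw [h0]
    simp only [hkappa_sum]
    rw [Finset.sum_const, Finset.card_univ, ← Nat.cast_smul_eq_nsmul ℂ, smul_smul,
      show ((Fintype.card G : ℂ)) = (N : ℂ) by rw [hN]; push_cast; ring,
      inv_mul_cancel₀ (by exact_mod_cast hNpos.ne')]
    simp
  · intro j
    rw [htraceP (a j)]
    have hbound : ∀ g : G, ∑ m, ((a j m * kappa U g Φ m).trace).re ≤ b j := by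
      intro g
      rw [key g (a j) (a (g • j)) (fun m => hcova g j m)]
      calc ∑ m, ((a (g • j) m * Φ m).trace).re ≤ b (g • j) := hfeas (g • j)
        _ = b j := (hcovb g j).symm
    calc N⁻¹ * ∑ g : G, ∑ m, ((a j m * kappa U g Φ m).trace).re
        ≤ N⁻¹ * ∑ _g : G, b j := by
          apply mul_le_mul_of_nonneg_left _ (le_of_lt (inv_pos.mpr hNpos))
          exact Finset.sum_le_sum fun g _ => hbound g
      _ = b j := by
          rw [Finset.sum_const, Finset.card_univ, nsmul_eq_mul, ← mul_assoc,
            show ((Fintype.card G : ℝ)) = N from rfl, inv_mul_cancel₀ hNpos.ne', one_mul]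
  · rw [primalObj, primalObj, htraceP c]
    have h0 : ∀ g : G, ∑ m, ((c m * kappa U g Φ m).trace).re = ∑ m, ((c m * Φ m).trace).re :=
      fun g => key g c c (fun m => hcovc g m)
    simp only [h0]
    rw [Finset.sum_const, Finset.card_univ, nsmul_eq_mul, ← mul_assoc,
      show ((Fintype.card G : ℝ)) = N from rfl, inv_mul_cancel₀ hNpos.ne', one_mul]
  · intro g m
    have hck : ∀ h : G, conjAct U g (kappa U h Φ m) = kappa U (h * g⁻¹) Φ (g • m) := by
      intro h
      have hco : (U (h * g⁻¹) : Matrix n n ℂ)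
          = (U h : Matrix n n ℂ) * star (U g : Matrix n n ℂ) := by
        have h1 : U (h * g⁻¹) = U h * (U g)⁻¹ := by
          rw [MonoidHom.map_mul, MonoidHom.map_inv]
        rw [h1]
        rfl
      have hsm : ((h * g⁻¹) • (g • m) : Fin M) = h • m := by
        rw [smul_smul, inv_mul_cancel_right]
      unfold kappa conjAct
      rw [hco, hsm, StarMul.star_mul, star_star]
      noncomm_ring
    have h0 : conjAct U g (P m) = ((N : ℂ))⁻¹ • ∑ h : G, conjAct U g (kappa U h Φ m) := by
      rw [hP]
      unfold conjAct
      rw [Matrix.mul_smul, Matrix.smul_mul, Finset.mul_sum, Finset.sum_mul]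
    rw [h0]
    simp only [hck]
    rw [hP]
    congr 1
    exact Fintype.sum_equiv (Equiv.mulRight g⁻¹) _ _ (fun h => rfl)
end
end
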